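/- Let E be a Euclidean subfield of ℝ, let F = E(i) = { a + b·i : a, b ∈ E } ⊆ ℂ, and let f : F → F be an SD map that preserves ℝ (i.e., f(x) is real for every x ∈ F ∩ ℝ). Then either f is the identity map (f(z) = z for all z ∈ F) or f is complex conjugation restricted to F (f(z) = z̄ for all z ∈ F). -/

import Mathlib

/-- For a subfield `E` of `ℝ`, the set `F = E(i) = { a + b·i : a, b ∈ E }` inside `ℂ`. -/
def adjoinI (E : Subfield ℝ) : Set ℂ :=
  {z : ℂ | ∃ a ∈ E, ∃ b ∈ E, z = (a : ℂ) + (b : ℂ) * Complex.I}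

open Complex

lemma mem_adjoinI {E : Subfield ℝ} {z : ℂ} :
    z ∈ adjoinI E ↔ z.re ∈ E ∧ z.im ∈ E := by
  constructor
  · rintro ⟨a, ha, b, hb, rfl⟩
    simp [ha, hb]
  · rintro ⟨h1, h2⟩
    exact ⟨z.re, h1, z.im, h2, by simp⟩

variable {E : Subfield ℝ}

lemma adj_zero : (0:ℂ) ∈ adjoinI E := by rw [mem_adjoinI]; exact ⟨zero_mem E, zero_mem E⟩
lemma adj_one : (1:ℂ) ∈ adjoinI E := by rw [mem_adjoinI]; simpa using ⟨one_mem E, zero_mem E⟩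
lemma adj_I : Complex.I ∈ adjoinI E := by rw [mem_adjoinI]; simpa using ⟨zero_mem E, one_mem E⟩
lemma adj_add {z w : ℂ} (hz : z ∈ adjoinI E) (hw : w ∈ adjoinI E) : z + w ∈ adjoinI E := by
  rw [mem_adjoinI] at *; exact ⟨add_mem hz.1 hw.1, add_mem hz.2 hw.2⟩
lemma adj_neg {z : ℂ} (hz : z ∈ adjoinI E) : -z ∈ adjoinI E := by
  rw [mem_adjoinI] at *; exact ⟨neg_mem hz.1, neg_mem hz.2⟩
lemma adj_sub {z w : ℂ} (hz : z ∈ adjoinI E) (hw : w ∈ adjoinI E) : z - w ∈ adjoinI E := by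
  rw [sub_eq_add_neg]; exact adj_add hz (adj_neg hw)
lemma adj_mul {z w : ℂ} (hz : z ∈ adjoinI E) (hw : w ∈ adjoinI E) : z * w ∈ adjoinI E := by
  rw [mem_adjoinI] at *
  constructor
  · rw [Complex.mul_re]; exact sub_mem (mul_mem hz.1 hw.1) (mul_mem hz.2 hw.2)
  · rw [Complex.mul_im]; exact add_mem (mul_mem hz.1 hw.2) (mul_mem hz.2 hw.1)
lemma adj_inv {z : ℂ} (hz : z ∈ adjoinI E) : z⁻¹ ∈ adjoinI E := by
  rw [mem_adjoinI] at *
  constructor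
  · rw [Complex.inv_re, Complex.normSq_apply]
    exact div_mem hz.1 (add_mem (mul_mem hz.1 hz.1) (mul_mem hz.2 hz.2))
  · rw [Complex.inv_im, Complex.normSq_apply]
    exact div_mem (neg_mem hz.2) (add_mem (mul_mem hz.1 hz.1) (mul_mem hz.2 hz.2))
lemma adj_div {z w : ℂ} (hz : z ∈ adjoinI E) (hw : w ∈ adjoinI E) : z / w ∈ adjoinI E := by
  rw [div_eq_mul_inv]; exact adj_mul hz (adj_inv hw)
lemma adj_ofReal {r : ℝ} (hr : r ∈ E) : (r:ℂ) ∈ adjoinI E := by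
  rw [mem_adjoinI]; simpa using (⟨hr, zero_mem E⟩ : r ∈ E ∧ (0:ℝ) ∈ E)
lemma adj_natCast (n : ℕ) : ((n:ℂ)) ∈ adjoinI E := by
  rw [mem_adjoinI]; simpa using ⟨natCast_mem E n, zero_mem E⟩
lemma adj_ofNat (n : ℕ) [n.AtLeastTwo] : (OfNat.ofNat n : ℂ) ∈ adjoinI E := by
  have := adj_natCast (E := E) n
  exact this
lemma adj_ratCast (q : ℚ) : ((q:ℂ)) ∈ adjoinI E := by
  rw [mem_adjoinI]; simpa using ⟨SubfieldClass.ratCast_mem E q, zero_mem E⟩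

/-- The SD functional condition. -/
def SDmap (E : Subfield ℝ) (f : ℂ → ℂ) : Prop :=
  ∀ x ∈ adjoinI E, ∀ y ∈ adjoinI E, x ≠ y →
      f x ≠ f y ∧ f ((x + y) / (x - y)) = (f x + f y) / (f x - f y)

variable {f : ℂ → ℂ}

lemma sd_inj (h : SDmap E f) {x y : ℂ} (hx : x ∈ adjoinI E) (hy : y ∈ adjoinI E)
    (hxy : x ≠ y) : f x ≠ f y := (h x hx y hy hxy).1

lemma sd_f1 (h : SDmap E f) : f 1 = 1 := by
  have key : ∀ a : ℂ, a ∈ adjoinI E → a ≠ 0 → f 1 * (f a - f 0) = f a + f 0 := by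
    intro a ha ha0
    obtain ⟨hne, heq⟩ := h a ha 0 adj_zero ha0
    have e1 : (a + 0) / (a - 0) = 1 := by
      simp [ha0]
    rw [e1] at heq
    rw [heq, div_mul_cancel₀]
    exact sub_ne_zero.mpr hne
  have h1 := key 1 adj_one one_ne_zero
  have h2 := key 2 (adj_ofNat 2) two_ne_zero
  have h12 : f 1 ≠ f 2 := sd_inj h adj_one (adj_ofNat 2) (by norm_num)
  have hz : (f 1 - 1) * (f 1 - f 2) = 0 := by linear_combination h1 - h2
  rcases mul_eq_zero.mp hz with h' | h'
  · exact sub_eq_zero.mp h'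
  · exact absurd (sub_eq_zero.mp h') h12

lemma sd_f0 (h : SDmap E f) : f 0 = 0 := by
  obtain ⟨hne, heq⟩ := h 1 adj_one 0 adj_zero one_ne_zero
  have e1 : ((1:ℂ) + 0) / (1 - 0) = 1 := by norm_num
  rw [e1, sd_f1 h] at heq
  have hne' : f 1 - f 0 ≠ 0 := sub_ne_zero.mpr hne
  rw [sd_f1 h] at hne'
  rw [eq_div_iff hne'] at heq
  linear_combination (-(1:ℂ)/2) * heq

lemma sd_ne0 (h : SDmap E f) {x : ℂ} (hx : x ∈ adjoinI E) (hx0 : x ≠ 0) : f x ≠ 0 := by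
  have := sd_inj h hx adj_zero hx0
  rwa [sd_f0 h] at this

lemma sd_odd (h : SDmap E f) {t : ℂ} (ht : t ∈ adjoinI E) : f (-t) = - f t := by
  have h1 : t + 1 ∈ adjoinI E := adj_add ht adj_one
  have h2 : t - 1 ∈ adjoinI E := adj_sub ht adj_one
  have hne : t + 1 ≠ t - 1 := by
    intro hh
    have : (2:ℂ) = 0 := by linear_combination hh
    norm_num at this
  obtain ⟨hAB, e1⟩ := h (t+1) h1 (t-1) h2 hne
  obtain ⟨hBA, e2⟩ := h (t-1) h2 (t+1) h1 hne.symm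
  have r1 : (t + 1 + (t - 1)) / (t + 1 - (t - 1)) = t := by
    rw [show (t + 1 - (t - 1)) = 2 from by ring]
    ring
  have r2 : (t - 1 + (t + 1)) / (t - 1 - (t + 1)) = -t := by
    rw [show (t - 1 - (t + 1)) = -2 from by ring]
    ring
  rw [r1] at e1
  rw [r2] at e2
  rw [e1, e2]
  have hne' : f (t+1) - f (t-1) ≠ 0 := sub_ne_zero.mpr hAB
  have hne'' : f (t-1) - f (t+1) ≠ 0 := sub_ne_zero.mpr hBA
  field_simp
  ring

lemma sd_fdiv (h : SDmap E f) {x y : ℂ} (hx : x ∈ adjoinI E) (hy : y ∈ adjoinI E)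
    (hy0 : y ≠ 0) : f (x / y) = f x / f y := by
  by_cases hxy : x = y
  · subst hxy
    rw [div_self hy0, sd_f1 h, div_self (sd_ne0 h hx hy0)]
  · have hsub : x - y ≠ 0 := sub_ne_zero.mpr hxy
    obtain ⟨hne, heq⟩ := h x hx y hy hxy
    set w := (x + y) / (x - y) with hw_def
    have hw : w ∈ adjoinI E := adj_div (adj_add hx hy) (adj_sub hx hy)
    have hw1 : w ≠ 1 := by
      intro hh
      rw [hw_def, div_eq_one_iff_eq hsub] at hh
      apply hy0
      linear_combination ((1:ℂ)/2) * hh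
    obtain ⟨hnw, heq2⟩ := h w hw 1 adj_one hw1
    rw [sd_f1 h] at hnw heq2
    have hkey : (w + 1) / (w - 1) = x / y := by
      have e1 : w + 1 = 2*x/(x-y) := by rw [hw_def]; field_simp; ring
      have e2 : w - 1 = 2*y/(x-y) := by rw [hw_def]; field_simp; ring
      rw [e1, e2, div_div_div_cancel_right₀ hsub]
      rw [mul_div_mul_left _ _ (two_ne_zero)]
    rw [hkey] at heq2
    rw [heq2, heq]
    have hne' : f x - f y ≠ 0 := sub_ne_zero.mpr hne
    have hfy : f y ≠ 0 := sd_ne0 h hy hy0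
    have e1 : (f x + f y) / (f x - f y) + 1 = 2 * f x / (f x - f y) := by
      field_simp; ring
    have e2 : (f x + f y) / (f x - f y) - 1 = 2 * f y / (f x - f y) := by
      field_simp; ring
    rw [e1, e2, div_div_div_cancel_right₀ hne']
    rw [mul_div_mul_left _ _ (two_ne_zero)]

lemma sd_fmul (h : SDmap E f) {x y : ℂ} (hx : x ∈ adjoinI E) (hy : y ∈ adjoinI E) :
    f (x * y) = f x * f y := by
  by_cases hy0 : y = 0
  · subst hy0; rw [mul_zero, sd_f0 h, mul_zero]
  · have hxy : x * y ∈ adjoinI E := adj_mul hx hy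
    have := sd_fdiv h hxy hy hy0
    rw [mul_div_cancel_right₀ _ hy0] at this
    rw [this]
    field_simp [sd_ne0 h hy hy0]

lemma sd_star (h : SDmap E f) {u v : ℂ} (hu : u ∈ adjoinI E) (hv : v ∈ adjoinI E) :
    (f u - f v) * f (u + v) = (f u + f v) * f (u - v) := by
  by_cases hv0 : v = 0
  · subst hv0; simp [sd_f0 h]
  by_cases huv : u = v
  · subst huv
    rw [sub_self u, sub_self (f u), sd_f0 h, zero_mul, mul_zero]
  · obtain ⟨hne, heq⟩ := h ((u+v)/2) (adj_div (adj_add hu hv) (adj_ofNat 2))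
      ((u-v)/2) (adj_div (adj_sub hu hv) (adj_ofNat 2)) (by
        intro hh
        apply hv0
        field_simp at hh
        linear_combination ((1:ℂ)/2) * hh)
    have harg : ((u+v)/2 + (u-v)/2) / ((u+v)/2 - (u-v)/2) = u / v := by
      rw [show (u+v)/2 + (u-v)/2 = u from by ring, show (u+v)/2 - (u-v)/2 = v from by ring]
    rw [harg, sd_fdiv h hu hv hv0] at heq
    have hc : f 2 ≠ 0 := sd_ne0 h (adj_ofNat 2) two_ne_zero
    have e1 : f ((u+v)/2) = f (u+v) / f 2 := sd_fdiv h (adj_add hu hv) (adj_ofNat 2) two_ne_zero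
    have e2 : f ((u-v)/2) = f (u-v) / f 2 := sd_fdiv h (adj_sub hu hv) (adj_ofNat 2) two_ne_zero
    rw [e1, e2] at heq hne
    have hAB : f (u+v) - f (u-v) ≠ 0 := by
      intro hh
      apply hne
      rw [sub_eq_zero] at hh
      rw [hh]
    have hfv : f v ≠ 0 := sd_ne0 h hv hv0
    have e3 : f (u+v) / f 2 + f (u-v) / f 2 = (f (u+v) + f (u-v)) / f 2 := by ring
    have e4 : f (u+v) / f 2 - f (u-v) / f 2 = (f (u+v) - f (u-v)) / f 2 := by ring
    rw [e3, e4, div_div_div_cancel_right₀ hc] at heq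
    rw [div_eq_div_iff hfv hAB] at heq
    linear_combination heq

def PresR (E : Subfield ℝ) (f : ℂ → ℂ) : Prop :=
  ∀ x ∈ adjoinI E, x.im = 0 → (f x).im = 0

lemma sd_real_eq {w : ℂ} (hw : w.im = 0) : w = (w.re : ℂ) :=
  Complex.ext (by simp) (by simp [hw])

lemma sd_f2 (h : SDmap E f) (hR : PresR E f) : f 2 = 2 := by
  set c := f 2 with hc_def
  have hc0 : c ≠ 0 := sd_ne0 h (adj_ofNat 2) two_ne_zero
  have hc1 : c ≠ 1 := by
    have := sd_inj h (adj_ofNat 2) adj_one (by norm_num)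
    rwa [sd_f1 h] at this
  have hm1 : f (-1) = -1 := by rw [show (-1:ℂ) = -(1:ℂ) from by norm_num, sd_odd h adj_one, sd_f1 h]
  have hcm1 : c ≠ -1 := by
    have := sd_inj h (adj_ofNat 2) (adj_neg adj_one) (by norm_num)
    rwa [hm1] at this
  have hcre : c.im = 0 := hR 2 (adj_ofNat 2) (by norm_num)
  have hci : c^2 + 1 ≠ 0 := by
    rw [sd_real_eq hcre]
    have e : ((c.re:ℂ))^2 + 1 = ((c.re^2 + 1 : ℝ) : ℂ) := by push_cast; ring
    rw [e]
    exact_mod_cast (by positivity : (c.re^2 + 1:ℝ) ≠ 0)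
  have hcc1 : c*c - 1 ≠ 0 := by
    intro hh
    have h2 : (c-1)*(c+1) = 0 := by linear_combination hh
    rcases mul_eq_zero.mp h2 with h' | h'
    · exact hc1 (by linear_combination h')
    · exact hcm1 (by linear_combination h')
  have f4 : f 4 = c * c := by
    rw [show (4:ℂ) = 2*2 from by norm_num, sd_fmul h (adj_ofNat 2) (adj_ofNat 2)]
  have f8 : f 8 = c * (c*c) := by
    rw [show (8:ℂ) = 2*4 from by norm_num, sd_fmul h (adj_ofNat 2) (adj_ofNat 4), f4]
  have f9 : f 9 = f 3 * f 3 := by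
    rw [show (9:ℂ) = 3*3 from by norm_num, sd_fmul h (adj_ofNat 3) (adj_ofNat 3)]
  have f10 : f 10 = c * f 5 := by
    rw [show (10:ℂ) = 2*5 from by norm_num, sd_fmul h (adj_ofNat 2) (adj_ofNat 5)]
  have E1 : (c - 1) * f 3 = c + 1 := by
    have := sd_star h (adj_ofNat 2) adj_one
    rw [show (2:ℂ) + 1 = 3 from by norm_num, show (2:ℂ) - 1 = 1 from by norm_num, sd_f1 h] at this
    linear_combination this
  have E2 : (c*c - 1) * f 5 = (c*c + 1) * f 3 := by
    have := sd_star h (adj_ofNat 4) adj_one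
    rw [show (4:ℂ) + 1 = 5 from by norm_num, show (4:ℂ) - 1 = 3 from by norm_num, sd_f1 h, f4] at this
    linear_combination this
  have E3 : (f 3 * f 3 - 1) * f 5 = (f 3 * f 3 + 1) * (c*c) := by
    have := sd_star h (adj_ofNat 9) adj_one
    rw [show (9:ℂ) + 1 = 10 from by norm_num, show (9:ℂ) - 1 = 8 from by norm_num, sd_f1 h,
      f9, f10, f8] at this
    apply mul_left_cancel₀ hc0
    linear_combination this
  have hx : f 3 = (c+1)/(c-1) := by
    rw [eq_div_iff (sub_ne_zero.mpr hc1)]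
    linear_combination E1
  have hy : f 5 = (c*c+1)*(c+1)/((c*c-1)*(c-1)) := by
    rw [eq_div_iff (mul_ne_zero hcc1 (sub_ne_zero.mpr hc1))]
    linear_combination (c-1)*E2 + (c*c+1)*E1
  rw [hx, hy] at E3
  have hd1 : c - 1 ≠ 0 := sub_ne_zero.mpr hc1
  field_simp [hd1, hcc1] at E3
  have hcp1 : c + 1 ≠ 0 := by
    intro hh; exact hcm1 (by linear_combination hh)
  have hu : (c*(c^2+1)*(c+1)*((c-1)*(c-1))*(c^2+1)*2) ≠ 0 := by
    apply mul_ne_zero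
    apply mul_ne_zero
    apply mul_ne_zero
    apply mul_ne_zero
    apply mul_ne_zero hc0 hci
    exact hcp1
    exact mul_ne_zero hd1 hd1
    exact hci
    norm_num
  have key : (c - 2) * (c*(c^2+1)*(c+1)*((c-1)*(c-1))*(c^2+1)*2) = 0 := by
    have hcc2 : c^2 - 1 ≠ 0 := by rw [sq]; exact hcc1
    rw [div_eq_iff hcc2] at E3
    linear_combination (-(c-1)^2) * E3
  have := (mul_eq_zero.mp key).resolve_right hu
  linear_combination this

lemma sd_real_mul_self_add_one_ne {w : ℂ} (hw : w.im = 0) : w * w + 1 ≠ 0 := by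
  rw [sd_real_eq hw]
  have e : ((w.re:ℂ)) * (w.re:ℂ) + 1 = ((w.re * w.re + 1 : ℝ) : ℂ) := by push_cast; ring
  rw [e]
  exact_mod_cast (by nlinarith [mul_self_nonneg w.re] : (w.re * w.re + 1:ℝ) ≠ 0)

lemma sd_ktrans (h : SDmap E f) (hR : PresR E f) {t : ℂ} (ht : t ∈ adjoinI E)
    (htre : t.im = 0) (h0 : t ≠ 0) (h1 : t ≠ 1) (hm1 : t ≠ -1) :
    ∃ k : ℂ, (k = 1 ∨ k = -1) ∧ f (t+1) = k * (f t + 1) ∧ f (t-1) = k * (f t - 1) := by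
  have hfm1 : f (-1) = -1 := by
    rw [show (-1:ℂ) = -(1:ℂ) from by norm_num, sd_odd h adj_one, sd_f1 h]
  set F := f t with hF_def
  have ht1 : t + 1 ∈ adjoinI E := adj_add ht adj_one
  have htm1 : t - 1 ∈ adjoinI E := adj_sub ht adj_one
  have htt : t * t ∈ adjoinI E := adj_mul ht ht
  have htt1 : t * t + 1 ∈ adjoinI E := adj_add htt adj_one
  have hF0 : F ≠ 0 := sd_ne0 h ht h0
  have hF1 : F ≠ 1 := by
    have := sd_inj h ht adj_one h1; rwa [sd_f1 h] at this
  have hFm1 : F ≠ -1 := by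
    have := sd_inj h ht (adj_neg adj_one) hm1; rwa [hfm1] at this
  have hFre : F.im = 0 := hR t ht htre
  have hFi : F * F + 1 ≠ 0 := sd_real_mul_self_add_one_ne hFre
  have hFp1 : F + 1 ≠ 0 := by intro hh; exact hFm1 (by linear_combination hh)
  have hFs1 : F - 1 ≠ 0 := sub_ne_zero.mpr hF1
  have hFF1 : F * F - 1 ≠ 0 := by
    intro hh
    rcases mul_eq_zero.mp (show (F-1)*(F+1) = 0 from by linear_combination hh) with h' | h'
    · exact hFs1 h'
    · exact hFp1 h'
  have ha0 : f (t+1) ≠ 0 := by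
    apply sd_ne0 h ht1
    intro hh; exact hm1 (by linear_combination hh)
  have E1 : (F - 1) * f (t+1) = (F + 1) * f (t-1) := by
    have := sd_star h ht adj_one
    rwa [sd_f1 h] at this
  have E3 : (F * F - 1) * f (t*t+1) = (F * F + 1) * (f (t+1) * f (t-1)) := by
    have := sd_star h htt adj_one
    rw [sd_f1 h, sd_fmul h ht ht, show t*t - 1 = (t+1)*(t-1) from by ring,
      sd_fmul h ht1 htm1] at this
    exact this
  have E4 : (f (t+1) * f (t+1) - f (t-1) * f (t-1)) * (2 * f (t*t+1))
      = (f (t+1) * f (t+1) + f (t-1) * f (t-1)) * (4 * F) := by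
    have := sd_star h (adj_mul ht1 ht1) (adj_mul htm1 htm1)
    rw [sd_fmul h ht1 ht1, sd_fmul h htm1 htm1,
      show (t+1)*(t+1) + (t-1)*(t-1) = 2*(t*t+1) from by ring,
      show (t+1)*(t+1) - (t-1)*(t-1) = 4*t from by ring,
      sd_fmul h (adj_ofNat 2) htt1, sd_f2 h hR,
      sd_fmul h (adj_ofNat 4) ht,
      show (4:ℂ) = 2*2 from by norm_num, sd_fmul h (adj_ofNat 2) (adj_ofNat 2), sd_f2 h hR] at this
    rw [show (2:ℂ)*2*F = 4*F from by norm_num] at this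
    exact this
  set k := f (t+1) / (F + 1) with hk_def
  have hk : f (t+1) = k * (F + 1) := by
    rw [hk_def, div_mul_cancel₀ _ hFp1]
  have hk0 : k ≠ 0 := by
    intro hh; rw [hh, zero_mul] at hk; exact ha0 hk
  have hb : f (t-1) = k * (F - 1) := by
    apply mul_left_cancel₀ hFp1
    linear_combination -E1 + (F-1) * hk
  have hA : f (t*t+1) = k * k * (F * F + 1) := by
    apply mul_left_cancel₀ hFF1
    linear_combination E3 + (F*F+1) * f (t-1) * hk + (F*F+1) * (k*(F+1)) * hb
  rw [hk, hb, hA] at E4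
  have hz : 8 * F * (F*F+1) * (k*k) * (k*k - 1) = 0 := by linear_combination E4
  have h8 : (8:ℂ) * F * (F*F+1) * (k*k) ≠ 0 := by
    apply mul_ne_zero
    apply mul_ne_zero
    apply mul_ne_zero
    norm_num
    exact hF0
    exact hFi
    exact mul_ne_zero hk0 hk0
  have hkk : k * k - 1 = 0 := by
    rcases mul_eq_zero.mp hz with h' | h'
    · exact absurd h' h8
    · exact h'
  refine ⟨k, ?_, hk, hb⟩
  rcases mul_eq_zero.mp (show (k-1)*(k+1) = 0 from by linear_combination hkk) with h' | h'
  · exact Or.inl (by linear_combination h')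
  · exact Or.inr (by linear_combination h')

lemma sd_f3 (h : SDmap E f) (hR : PresR E f) : f 3 = 3 := by
  have := sd_star h (adj_ofNat 2) adj_one
  rw [show (2:ℂ) + 1 = 3 from by norm_num, show (2:ℂ) - 1 = 1 from by norm_num,
    sd_f1 h, sd_f2 h hR] at this
  linear_combination this

lemma sd_trans (h : SDmap E f) (hR : PresR E f) {t : ℂ} (ht : t ∈ adjoinI E)
    (htre : t.im = 0) : f (t + 1) = f t + 1 := by
  have hfm1 : f (-1) = -1 := by
    rw [show (-1:ℂ) = -(1:ℂ) from by norm_num, sd_odd h adj_one, sd_f1 h]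
  by_cases e0 : t = 0
  · subst e0; rw [zero_add, sd_f1 h, sd_f0 h]; norm_num
  by_cases e1 : t = 1
  · subst e1; rw [show (1:ℂ)+1 = 2 from by norm_num, sd_f2 h hR, sd_f1 h]; norm_num
  by_cases em1 : t = -1
  · subst em1; rw [show (-1:ℂ)+1 = 0 from by norm_num, sd_f0 h, hfm1]; norm_num
  by_cases e2 : t = 2
  · subst e2; rw [show (2:ℂ)+1 = 3 from by norm_num, sd_f3 h hR, sd_f2 h hR]; norm_num
  by_cases em2 : t = -2
  · subst em2
    rw [show (-2:ℂ)+1 = -1 from by norm_num, hfm1,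
      show (-2:ℂ) = -(2:ℂ) from by norm_num, sd_odd h (adj_ofNat 2), sd_f2 h hR]
    norm_num
  -- general case
  set F := f t with hF_def
  have hF0 : F ≠ 0 := sd_ne0 h ht e0
  have ht1 : t + 1 ∈ adjoinI E := adj_add ht adj_one
  have htm1 : t - 1 ∈ adjoinI E := adj_sub ht adj_one
  obtain ⟨k0, hk0d, hk0e, hk0b⟩ := sd_ktrans h hR ht htre e0 e1 em1
  rcases hk0d with rfl | rfl
  · rw [hk0e, one_mul]
  exfalso
  have hA : f (t+1) = -(F+1) := by linear_combination hk0e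
  have hB : f (t-1) = -(F-1) := by linear_combination hk0b
  obtain ⟨k1, hk1d, hk1e, _⟩ := sd_ktrans h hR ht1 (by simp [htre])
    (by intro hh; exact em1 (by linear_combination hh))
    (by intro hh; exact e0 (by linear_combination hh))
    (by intro hh; exact em2 (by linear_combination hh))
  obtain ⟨k2, hk2d, _, hk2b⟩ := sd_ktrans h hR htm1 (by simp [htre])
    (by intro hh; exact e1 (by linear_combination hh))
    (by intro hh; exact e2 (by linear_combination hh))
    (by intro hh; exact e0 (by linear_combination hh))
  rw [show t+1+1 = t+2 from by ring] at hk1e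
  rw [show t-1-1 = t-2 from by ring] at hk2b
  have E5 : (F - 2) * f (t+2) = (F + 2) * f (t-2) := by
    have := sd_star h ht (adj_ofNat 2)
    rwa [sd_f2 h hR] at this
  rw [hk1e, hk2b, hA, hB] at E5
  rcases hk1d with rfl | rfl <;> rcases hk2d with rfl | rfl
  · exact hF0 (by linear_combination ((1:ℂ)/4) * E5)
  · exact hF0 (mul_self_eq_zero.mp (by linear_combination (-(1:ℂ)/2) * E5))
  · exact hF0 (mul_self_eq_zero.mp (by linear_combination ((1:ℂ)/2) * E5))
  · exact hF0 (by linear_combination (-(1:ℂ)/4) * E5)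

lemma adj_intCast (n : ℤ) : ((n:ℂ)) ∈ adjoinI E := by
  rw [mem_adjoinI]; simpa using ⟨intCast_mem E n, zero_mem E⟩

lemma sd_addreal (h : SDmap E f) (hR : PresR E f) {x y : ℂ} (hx : x ∈ adjoinI E)
    (hy : y ∈ adjoinI E) (hxim : x.im = 0) (hyim : y.im = 0) :
    f (x + y) = f x + f y := by
  by_cases hy0 : y = 0
  · subst hy0; rw [add_zero, sd_f0 h, add_zero]
  have hdiv : x / y ∈ adjoinI E := adj_div hx hy
  have hdim : (x / y).im = 0 := by
    rw [sd_real_eq hxim, sd_real_eq hyim, ← Complex.ofReal_div]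
    simp
  have e : x + y = (x / y + 1) * y := by field_simp
  rw [e, sd_fmul h (adj_add hdiv adj_one) hy, sd_trans h hR hdiv hdim,
    sd_fdiv h hx hy hy0]
  have hfy : f y ≠ 0 := sd_ne0 h hy hy0
  field_simp

lemma sd_fnat (h : SDmap E f) (hR : PresR E f) : ∀ n : ℕ, f n = n := by
  intro n
  induction n with
  | zero => simpa using sd_f0 h
  | succ m ih =>
    push_cast
    rw [sd_trans h hR (adj_natCast m) (by simp), ih]

lemma sd_fint (h : SDmap E f) (hR : PresR E f) : ∀ n : ℤ, f n = n := by
  intro n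
  rcases n with m | m
  · exact_mod_cast sd_fnat h hR m
  · have : ((Int.negSucc m : ℤ):ℂ) = -((m+1 : ℕ):ℂ) := by push_cast; ring
    rw [this, sd_odd h (adj_natCast (m+1)), sd_fnat h hR (m+1)]

lemma sd_frat (h : SDmap E f) (hR : PresR E f) : ∀ q : ℚ, f q = q := by
  intro q
  rw [Rat.cast_def]
  rw [sd_fdiv h (adj_intCast q.num) (adj_natCast q.den)
    (Nat.cast_ne_zero.mpr q.den_nz), sd_fint h hR, sd_fnat h hR]

def Eucl (E : Subfield ℝ) : Prop := ∀ x : ℝ, x ∈ E → 0 ≤ x → ∃ y ∈ E, y ^ 2 = x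

lemma sd_nonneg (h : SDmap E f) (hR : PresR E f) (hE : Eucl E) {w : ℂ}
    (hw : w ∈ adjoinI E) (hwim : w.im = 0) (hwpos : 0 ≤ w.re) : 0 ≤ (f w).re := by
  obtain ⟨y, hyE, hy2⟩ := hE w.re (mem_adjoinI.mp hw).1 hwpos
  have hyS : (y:ℂ) ∈ adjoinI E := adj_ofReal hyE
  have e : w = (y:ℂ) * (y:ℂ) := by
    rw [sd_real_eq hwim, ← hy2]; push_cast; ring
  rw [e, sd_fmul h hyS hyS]
  have hyim : (f y).im = 0 := hR _ hyS (by simp)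
  rw [Complex.mul_re, hyim]
  simpa using mul_self_nonneg (f (y:ℂ)).re

lemma sd_fixreal (h : SDmap E f) (hR : PresR E f) (hE : Eucl E) {z : ℂ}
    (hz : z ∈ adjoinI E) (him : z.im = 0) : f z = z := by
  have hfim : (f z).im = 0 := hR z hz him
  rcases lt_trichotomy (f z).re z.re with hlt | heq | hgt
  · obtain ⟨q, hq1, hq2⟩ := exists_rat_btwn hlt
    exfalso
    have hqS : ((-q : ℚ):ℂ) ∈ adjoinI E := adj_ratCast (-q)
    have hw : z + ((-q : ℚ):ℂ) ∈ adjoinI E := adj_add hz hqS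
    have hwim : (z + ((-q : ℚ):ℂ)).im = 0 := by simp [him]
    have hwpos : 0 ≤ (z + ((-q : ℚ):ℂ)).re := by
      simp only [Complex.add_re, Complex.ratCast_re]
      push_cast
      linarith
    have hge := sd_nonneg h hR hE hw hwim hwpos
    rw [sd_addreal h hR hz hqS him (by simp), sd_frat h hR] at hge
    rw [Complex.add_re] at hge
    have : ((-q : ℚ):ℂ).re = -(q:ℝ) := by push_cast; simp
    rw [this] at hge
    linarith
  · rw [sd_real_eq hfim, heq, ← sd_real_eq him]
  · obtain ⟨q, hq1, hq2⟩ := exists_rat_btwn hgt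
    exfalso
    have hqS : ((q : ℚ):ℂ) ∈ adjoinI E := adj_ratCast q
    have hw : ((q : ℚ):ℂ) + -z ∈ adjoinI E := adj_add hqS (adj_neg hz)
    have hwim : (((q : ℚ):ℂ) + -z).im = 0 := by simp [him]
    have hwpos : 0 ≤ (((q : ℚ):ℂ) + -z).re := by
      simp only [Complex.add_re, Complex.neg_re, Complex.ratCast_re]
      linarith
    have hge := sd_nonneg h hR hE hw hwim hwpos
    rw [sd_addreal h hR hqS (adj_neg hz) (by simp) (by simp [him]),
      sd_frat h hR, sd_odd h hz] at hge
    rw [Complex.add_re, Complex.neg_re] at hge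
    rw [Complex.ratCast_re] at hge
    linarith

lemma sd_key (h : SDmap E f) (hR : PresR E f) (hE : Eucl E)
    (hfI : f Complex.I = Complex.I) : ∀ z ∈ adjoinI E, f z = z := by
  have hI2 : (Complex.I)^2 = -1 := Complex.I_sq
  have hfmI : f (-Complex.I) = -Complex.I := by rw [sd_odd h adj_I, hfI]
  have h2E : (2:ℝ) ∈ E := by
    have := natCast_mem E 2; exact_mod_cast this
  -- the square lemma
  have hsq : ∀ a b : ℝ, a ∈ E → b ∈ E → a ≠ 0 → b ≠ 0 →
      (f ((a:ℂ) + (b:ℂ)*Complex.I))^2 = ((a:ℂ) + (b:ℂ)*Complex.I)^2 := by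
    intro a b ha hb ha0 hb0
    set A := (a:ℂ) with hA_def
    set B := (b:ℂ) with hB_def
    have hzS : A + B*Complex.I ∈ adjoinI E := ⟨a, ha, b, hb, rfl⟩
    have hvS : A - B*Complex.I ∈ adjoinI E := ⟨a, ha, -b, neg_mem hb, by push_cast; ring⟩
    have hwS : B + A*Complex.I ∈ adjoinI E := ⟨b, hb, a, ha, rfl⟩
    set P := f (A + B*Complex.I) with hP_def
    set Q := f (B + A*Complex.I) with hQ_def
    have hw0 : B + A*Complex.I ≠ 0 := by
      intro hh
      have := congrArg Complex.im hh
      simp [hA_def, hB_def] at this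
      exact ha0 this
    have hQ0 : Q ≠ 0 := sd_ne0 h hwS hw0
    have hfv : f (A - B*Complex.I) = -Complex.I * Q := by
      rw [show A - B*Complex.I = (-Complex.I) * (B + A*Complex.I) from by
        linear_combination A * hI2]
      rw [sd_fmul h (adj_neg adj_I) hwS, hfmI]
    have f2A : f (2*A) = 2*A :=
      sd_fixreal h hR hE (adj_mul (adj_ofNat 2) (adj_ofReal ha)) (by simp [hA_def])
    have f2BI : f (2*B*Complex.I) = 2*B*Complex.I := by
      rw [show (2:ℂ)*B*Complex.I = (2*B)*Complex.I from by ring,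
        sd_fmul h (adj_mul (adj_ofNat 2) (adj_ofReal hb)) adj_I,
        sd_fixreal h hR hE (adj_mul (adj_ofNat 2) (adj_ofReal hb)) (by simp [hB_def]), hfI]
    have h1 := sd_star h hzS hvS
    rw [hfv, show A + B*Complex.I + (A - B*Complex.I) = 2*A from by ring,
      show A + B*Complex.I - (A - B*Complex.I) = 2*B*Complex.I from by ring,
      f2A, f2BI] at h1
    have h2 : P * (-Complex.I * Q) = ((a^2+b^2 : ℝ):ℂ) := by
      have := sd_fmul h hzS hvS
      rw [hfv, show (A + B*Complex.I) * (A - B*Complex.I) = ((a^2+b^2 : ℝ):ℂ) from by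
        push_cast; linear_combination (-(b:ℂ)^2) * hI2] at this
      rw [← this, sd_fixreal h hR hE
        (adj_ofReal (add_mem (pow_mem ha 2) (pow_mem hb 2))) (Complex.ofReal_im _)]
    have h3 : P * (A - B*Complex.I) = Q * (B - A*Complex.I) := by
      linear_combination ((1:ℂ)/2) * h1 - Q * B * hI2
    have hv0 : A - B*Complex.I ≠ 0 := by
      intro hh
      have := congrArg Complex.re hh
      simp [hA_def, hB_def] at this
      exact ha0 this
    have hC0 : (A - B*Complex.I) * (-Complex.I * Q) ≠ 0 :=
      mul_ne_zero hv0 (mul_ne_zero (by simpa using Complex.I_ne_zero) hQ0)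
    apply mul_right_cancel₀ hC0
    have r0 : ((a^2+b^2 : ℝ):ℂ) = (A + B*Complex.I) * (A - B*Complex.I) := by
      push_cast; linear_combination (b:ℂ)^2 * hI2
    have s1 : P^2 * ((A - B*Complex.I) * (-Complex.I * Q))
        = (Q*(B - A*Complex.I)) * ((a^2+b^2 : ℝ):ℂ) := by
      linear_combination (P*(-Complex.I*Q)) * h3 + (Q*(B - A*Complex.I)) * h2
    have s2 : ((A + B*Complex.I))^2 * ((A - B*Complex.I) * (-Complex.I * Q))
        = (Q*(B - A*Complex.I)) * ((a^2+b^2 : ℝ):ℂ) := by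
      linear_combination (-(Q*(B - A*Complex.I))) * r0
        + (-(Q*(A + B*Complex.I)*(A - B*Complex.I)*B)) * hI2
    exact s1.trans s2.symm
  intro z hz
  obtain ⟨a, ha, b, hb, rfl⟩ := hz
  by_cases hb0 : b = 0
  · subst hb0
    simp only [Complex.ofReal_zero, zero_mul, add_zero]
    exact sd_fixreal h hR hE (adj_ofReal ha) (Complex.ofReal_im a)
  by_cases ha0 : a = 0
  · subst ha0
    simp only [Complex.ofReal_zero, zero_add]
    rw [sd_fmul h (adj_ofReal hb) adj_I,
      sd_fixreal h hR hE (adj_ofReal hb) (Complex.ofReal_im b), hfI]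
  · have hzS : (a:ℂ) + (b:ℂ)*Complex.I ∈ adjoinI E := ⟨a, ha, b, hb, rfl⟩
    have hP2 := hsq a b ha hb ha0 hb0
    have hd : (f ((a:ℂ) + (b:ℂ)*Complex.I) - ((a:ℂ) + (b:ℂ)*Complex.I))
        * (f ((a:ℂ) + (b:ℂ)*Complex.I) + ((a:ℂ) + (b:ℂ)*Complex.I)) = 0 := by
      linear_combination hP2
    rcases mul_eq_zero.mp hd with h' | h'
    · exact sub_eq_zero.mp h'
    exfalso
    have hP : f ((a:ℂ) + (b:ℂ)*Complex.I) = -((a:ℂ) + (b:ℂ)*Complex.I) := by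
      linear_combination h'
    have h2a : (2*a : ℝ) ∈ E := mul_mem h2E ha
    have h2a0 : (2*a : ℝ) ≠ 0 := by intro hh; exact ha0 (by linarith)
    have hsq' := hsq (2*a) b h2a hb h2a0 hb0
    rw [show ((2*a:ℝ):ℂ) = 2*(a:ℂ) from by push_cast; ring] at hsq'
    have fBI : f ((b:ℂ)*Complex.I) = (b:ℂ)*Complex.I := by
      rw [sd_fmul h (adj_ofReal hb) adj_I,
        sd_fixreal h hR hE (adj_ofReal hb) (Complex.ofReal_im b), hfI]
    have h5 := sd_star h hzS (adj_ofReal ha)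
    rw [sd_fixreal h hR hE (adj_ofReal ha) (Complex.ofReal_im a),
      show (a:ℂ) + (b:ℂ)*Complex.I + (a:ℂ) = 2*(a:ℂ) + (b:ℂ)*Complex.I from by ring,
      show (a:ℂ) + (b:ℂ)*Complex.I - (a:ℂ) = (b:ℂ)*Complex.I from by ring,
      fBI, hP] at h5
    have e' : (2*(a:ℂ) + (b:ℂ)*Complex.I) * f (2*(a:ℂ) + (b:ℂ)*Complex.I)
        = -((b:ℂ)^2) := by
      linear_combination -h5 + (b:ℂ)^2 * hI2
    have h6 : (2*(a:ℂ) + (b:ℂ)*Complex.I)^4 = ((b:ℂ))^4 := by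
      have e2 : (2*(a:ℂ) + (b:ℂ)*Complex.I)^4
          = ((2*(a:ℂ) + (b:ℂ)*Complex.I) * f (2*(a:ℂ) + (b:ℂ)*Complex.I))^2 := by
        rw [mul_pow, hsq']; ring
      rw [e2, e']; ring
    have h7 := congrArg Complex.normSq h6
    rw [map_pow, map_pow] at h7
    have hn1 : Complex.normSq (2*(a:ℂ) + (b:ℂ)*Complex.I) = (2*a)*(2*a) + b*b := by
      rw [Complex.normSq_apply]; simp
    have hn2 : Complex.normSq ((b:ℂ)) = b*b := Complex.normSq_ofReal b
    rw [hn1, hn2] at h7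
    have hlt : b*b < (2*a)*(2*a) + b*b := by nlinarith [mul_self_pos.mpr ha0]
    have hpow := pow_lt_pow_left₀ hlt (mul_self_nonneg b) (by norm_num : (4:ℕ) ≠ 0)
    rw [h7] at hpow
    exact lt_irrefl _ hpow

theorem real_preserving_sd_map_euclidean_adjoinI (E : Subfield ℝ)
    (hE : ∀ x : ℝ, x ∈ E → 0 ≤ x → ∃ y ∈ E, y ^ 2 = x)
    (f : ℂ → ℂ)
    (hmap : ∀ z ∈ adjoinI E, f z ∈ adjoinI E)
    (hSD : ∀ x ∈ adjoinI E, ∀ y ∈ adjoinI E, x ≠ y →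
      f x ≠ f y ∧ f ((x + y) / (x - y)) = (f x + f y) / (f x - f y))
    (hR : ∀ x ∈ adjoinI E, x.im = 0 → (f x).im = 0) :
    (∀ z ∈ adjoinI E, f z = z) ∨ (∀ z ∈ adjoinI E, f z = (starRingEnd ℂ) z) := by
  have hS : SDmap E f := hSD
  have hPR : PresR E f := hR
  have hEu : Eucl E := hE
  have hI2 : (Complex.I)^2 = -1 := Complex.I_sq
  have hfm1 : f (-1) = -1 := by
    rw [show (-1:ℂ) = -(1:ℂ) from by norm_num, sd_odd hS adj_one, sd_f1 hS]
  have hII := sd_fmul hS adj_I adj_I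
  rw [Complex.I_mul_I, hfm1] at hII
  have hd : (f Complex.I - Complex.I) * (f Complex.I + Complex.I) = 0 := by
    linear_combination -hII - hI2
  rcases mul_eq_zero.mp hd with h' | h'
  · exact Or.inl (sd_key hS hPR hEu (sub_eq_zero.mp h'))
  · have hfIneg : f Complex.I = -Complex.I := eq_neg_of_add_eq_zero_left h'
    set g : ℂ → ℂ := fun z => (starRingEnd ℂ) (f z) with hg_def
    have hg : SDmap E g := by
      intro x hx y hy hxy
      obtain ⟨hne, heq⟩ := hSD x hx y hy hxy
      constructor
      · intro hh
        apply hne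
        have := congrArg (starRingEnd ℂ) hh
        simpa [hg_def] using this
      · show (starRingEnd ℂ) (f ((x+y)/(x-y))) = _
        rw [heq, map_div₀, map_add, map_sub]
    have hgR : PresR E g := by
      intro x hx hxim
      have := hR x hx hxim
      show ((starRingEnd ℂ) (f x)).im = 0
      rw [Complex.conj_im, this, neg_zero]
    have hgI : g Complex.I = Complex.I := by
      show (starRingEnd ℂ) (f Complex.I) = Complex.I
      rw [hfIneg]
      simp
    have hkey := sd_key hg hgR hEu hgI
    right
    intro z hz
    have := hkey z hz
    have := congrArg (starRingEnd ℂ) this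
    simpa [hg_def] using this
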